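/- Suppose a system (h_1, …, h_L) of polynomials in 𝔽_q[t][u] satisfies Condition (⋆). Then there exists a sequence (r_x)_{x ∈ 𝔽_q[t]∖{0}} of elements of 𝔽_q[t] such that for all nonzero m, y ∈ 𝔽_q[t]: deg r_y < deg y, r_{my} ≡ r_y (mod y), and h_j(r_y) ≡ 0 (mod y) for all 1 ≤ j ≤ L. -/

import Mathlib

open Polynomial Classical

/-- Embedding of `F[t]` into `K_∞ = F((1/t))`, realized as Laurent series in `X = 1/t`
(so `t ↦ X⁻¹`, i.e. the single Hahn series with exponent `-1`). -/
noncomputable def tEmbed (F : Type*) [Field F] : Polynomial F →+* LaurentSeries F :=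
  (Polynomial.aeval (HahnSeries.single (-1 : ℤ) (1 : F))).toRingHom

/-- `ord` of an element of `K_∞` (in terms of `t`): the largest `t`-exponent, `⊥` if zero. -/
noncomputable def ordinf {F : Type*} [Field F] (α : LaurentSeries F) : EReal :=
  if α = 0 then ⊥ else (((-α.order : ℤ) : ℝ) : EReal)

/-- Fractional part `{α}`: the part with negative `t`-exponents (positive `X`-exponents). -/
noncomputable def fracPart {F : Type*} [Field F] (α : LaurentSeries F) : LaurentSeries F :=
  { coeff := fun i => if 1 ≤ i then α.coeff i else 0,
    isPWO_support' := α.isPWO_support'.mono (fun i hi => by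
      by_cases h : (1:ℤ) ≤ i <;> simp only [Function.mem_support, h, if_true, if_false] at hi ⊢ <;>
        first | exact hi | exact absurd rfl hi) }

/-- `res α`: the coefficient of `t⁻¹` in `α`. -/
noncomputable def res {F : Type*} [Field F] (α : LaurentSeries F) : F := α.coeff 1

/-- A polynomial is supported on `K ⊆ ℤ⁺` if its nonconstant coefficients are nonzero
exactly at the exponents in `K`. -/
def SupportedOn {R : Type*} [Semiring R] (h : Polynomial R) (K : Set ℕ) : Prop :=
  (∀ k ∈ K, 0 < k) ∧ ∀ r : ℕ, 0 < r → (h.coeff r ≠ 0 ↔ r ∈ K)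

/-- The shadow `S(K)` of `K ⊆ ℤ⁺`: positive integers `j` with `j ≼_p r` for some `r ∈ K`. -/
def Shadow (p : ℕ) (K : Set ℕ) : Set ℕ :=
  {j | 0 < j ∧ ∃ r ∈ K, ¬ p ∣ Nat.choose r j}

/-- `K* = {k ∈ K : p ∤ k and pᵛk ∉ S(K) for all v ≥ 1}`. -/
def Kstar (p : ℕ) (K : Set ℕ) : Set ℕ :=
  {k | k ∈ K ∧ ¬ p ∣ k ∧ ∀ v : ℕ, 0 < v → p ^ v * k ∉ Shadow p K}

/-- `k` is maximal in `K` with respect to the partial order `≼_p`. -/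
def MaximalIn (p : ℕ) (K : Set ℕ) (k : ℕ) : Prop :=
  k ∈ K ∧ ∀ r ∈ K, ¬ p ∣ Nat.choose r k → r = k

/-- The part of a polynomial consisting of the monomials with exponents in `S`. -/
noncomputable def portion {R : Type*} [Semiring R] (h : Polynomial R) (S : Set ℕ) :
    Polynomial R :=
  ∑ r ∈ h.support, if r ∈ S then Polynomial.C (h.coeff r) * Polynomial.X ^ r else 0

/-- The polynomial of degree `< N` with coefficient vector `c`. -/
noncomputable def polyOf {F : Type*} [Semiring F] (N : ℕ) (c : Fin N → F) : Polynomial F :=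
  ∑ i : Fin N, Polynomial.C (c i) * Polynomial.X ^ (i : ℕ)

/-- `ord` of a polynomial in `F[t]`, i.e. its degree, with `⊥` for `0`. -/
noncomputable def pOrd {F : Type*} [Field F] (x : Polynomial F) : EReal :=
  if x = 0 then ⊥ else ((x.natDegree : ℝ) : EReal)

/-- **Lemma (compatible sequence of common roots for a system satisfying Condition (⋆)).** -/
theorem stmt6 (q : ℕ) (F : Type*) [Field F] [Fintype F] (hcard : Fintype.card F = q)
    (L : ℕ) (h : Fin L → Polynomial (Polynomial F))
    (hstar : ∀ g : Polynomial F, g ≠ 0 → ∃ m : Polynomial F, ∀ i, g ∣ (h i).eval m) :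
    ∃ r : Polynomial F → Polynomial F, ∀ y : Polynomial F, y ≠ 0 →
      (r y).degree < y.degree ∧
      (∀ m : Polynomial F, m ≠ 0 → y ∣ (r (m * y) - r y)) ∧
      ∀ j, y ∣ (h j).eval (r y) := by
  classical
  -- the "universal root" function
  set M : Polynomial F → Polynomial F := fun g =>
    if hg : g ≠ 0 then Classical.choose (hstar g hg) else 0 with hM
  have hMspec : ∀ g : Polynomial F, g ≠ 0 → ∀ i, g ∣ (h i).eval (M g) := by
    intro g hg i
    simp only [hM, dif_pos hg]
    exact Classical.choose_spec (hstar g hg) i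
  -- the filter of divisibility
  set D : {y : Polynomial F // y ≠ 0} → Filter (Polynomial F) := fun y =>
    Filter.principal {g | y.1 ∣ g ∧ g ≠ 0} with hD
  have hdir : Directed (· ≥ ·) D := by
    rintro ⟨a, ha⟩ ⟨b, hb⟩
    refine ⟨⟨a * b, mul_ne_zero ha hb⟩, ?_, ?_⟩
    · simp only [hD, ge_iff_le, Filter.principal_mono]
      rintro g ⟨hdvd, hg⟩
      exact ⟨(dvd_mul_right a b).trans hdvd, hg⟩
    · simp only [hD, ge_iff_le, Filter.principal_mono]
      rintro g ⟨hdvd, hg⟩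
      exact ⟨(dvd_mul_left b a).trans hdvd, hg⟩
  haveI : Nonempty {y : Polynomial F // y ≠ 0} := ⟨⟨1, one_ne_zero⟩⟩
  have hne : (⨅ y, D y).NeBot := by
    refine Filter.iInf_neBot_of_directed hdir fun y => ?_
    simp only [hD, Filter.principal_neBot_iff]
    exact ⟨y.1, dvd_refl _, y.2⟩
  set U : Ultrafilter (Polynomial F) := Ultrafilter.of (⨅ y, D y) with hU
  have hUle : (U : Filter (Polynomial F)) ≤ ⨅ y, D y := Ultrafilter.of_le _
  have hmemU : ∀ y : Polynomial F, y ≠ 0 → {g | y ∣ g ∧ g ≠ 0} ∈ U := by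
    intro y hy
    have h0 : {g | y ∣ g ∧ g ≠ 0} ∈ D ⟨y, hy⟩ := by
      rw [hD]
      exact Filter.mem_principal_self _
    have h1 : {g | y ∣ g ∧ g ≠ 0} ∈ ⨅ y, D y := iInf_le D ⟨y, hy⟩ h0
    exact Ultrafilter.mem_coe.mp (hUle h1)
  -- key: for each y there's a limiting residue
  have key : ∀ y : Polynomial F, y ≠ 0 → ∃ s : Polynomial F,
      {g | M g % y = s} ∈ U := by
    intro y hy
    have hfin : ({p : Polynomial F | p.degree < y.degree}).Finite := by
      haveI : Finite (Polynomial.degreeLT F y.natDegree) :=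
        Finite.of_equiv _ (Polynomial.degreeLTEquiv F y.natDegree).toEquiv.symm
      have hsub : ({p : Polynomial F | p.degree < y.degree}) ⊆
          ↑(Polynomial.degreeLT F y.natDegree) := by
        intro p hp
        rw [SetLike.mem_coe, Polynomial.mem_degreeLT]
        exact lt_of_lt_of_le hp (le_of_eq (Polynomial.degree_eq_natDegree hy))
      exact Set.Finite.subset
        (Set.toFinite (↑(Polynomial.degreeLT F y.natDegree) : Set (Polynomial F))) hsub
    have hmem : {p : Polynomial F | p.degree < y.degree} ∈ U.map (fun g => M g % y) := by
      have : ∀ g : Polynomial F, (M g % y).degree < y.degree := fun g =>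
        EuclideanDomain.mod_lt _ hy
      exact Filter.mem_map.2 (Filter.univ_mem' fun g => this g)
    obtain ⟨s, _, hs⟩ := Ultrafilter.eq_pure_of_finite_mem hfin hmem
    refine ⟨s, ?_⟩
    have : {s} ∈ U.map (fun g => M g % y) := by rw [hs]; exact Filter.mem_pure.2 rfl
    simpa [Filter.mem_map, Set.preimage] using this
  set r : Polynomial F → Polynomial F := fun y =>
    if hy : y ≠ 0 then Classical.choose (key y hy) else 0 with hr
  have hrspec : ∀ y : Polynomial F, (hy : y ≠ 0) → {g | M g % y = r y} ∈ U := by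
    intro y hy
    simp only [hr, dif_pos hy]
    exact Classical.choose_spec (key y hy)
  refine ⟨r, fun y hy => ⟨?_, ?_, ?_⟩⟩
  · -- degree
    obtain ⟨g, hg⟩ := Ultrafilter.nonempty_of_mem (hrspec y hy)
    rw [← hg]
    exact EuclideanDomain.mod_lt _ hy
  · -- compatibility
    intro m hm
    have hmy : m * y ≠ 0 := mul_ne_zero hm hy
    obtain ⟨g, hg1, hg2⟩ :=
      Ultrafilter.nonempty_of_mem (Filter.inter_mem (hrspec (m * y) hmy) (hrspec y hy))
    rw [← hg1, ← hg2]
    have e1 : y ∣ M g % (m * y) - M g := by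
      have : m * y ∣ M g % (m * y) - M g := by
        have := EuclideanDomain.div_add_mod (M g) (m * y)
        exact ⟨-(M g / (m * y)), by linear_combination this⟩
      exact (dvd_mul_left y m).trans this
    have e2 : y ∣ M g - M g % y := by
      have := EuclideanDomain.div_add_mod (M g) y
      exact ⟨M g / y, by linear_combination -this⟩
    have := dvd_add e1 e2
    simpa [sub_add_sub_cancel] using this
  · -- roots
    intro j
    obtain ⟨g, hg1, hg2, hg3⟩ :=
      Ultrafilter.nonempty_of_mem (Filter.inter_mem (hrspec y hy) (hmemU y hy))
    have hroot : y ∣ (h j).eval (M g) := hg2.trans (hMspec g hg3 j)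
    have hdiff : y ∣ (h j).eval (M g) - (h j).eval (r y) := by
      have hsub : y ∣ M g - r y := by
        rw [← hg1]
        have := EuclideanDomain.div_add_mod (M g) y
        exact ⟨M g / y, by linear_combination -this⟩
      exact hsub.trans (Polynomial.sub_dvd_eval_sub _ _ _)
    have := dvd_sub hroot hdiff
    simpa using this
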